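/- For p, q ∈ Q⁰_λ, we have p ≤⁰ q (i.e., fil(p) ⊆ fil(q)) if and only if there is ε < λ such that for all α ∈ C^q ∖ ε and all A ∈ d^q_α there exists β ∈ C^p with A ∩ Z^p_β ∈ d^p_β. -/

import Mathlib

open Set

noncomputable section

def IsUltrafilterOn {α : Type*} (Z : Set α) (d : Set (Set α)) : Prop :=
  (∀ A ∈ d, A ⊆ Z) ∧ Z ∈ d ∧ ∅ ∉ d ∧
  (∀ A B : Set α, A ∈ d → A ⊆ B → B ⊆ Z → B ∈ d) ∧
  (∀ A B : Set α, A ∈ d → B ∈ d → A ∩ B ∈ d) ∧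
  (∀ A : Set α, A ⊆ Z → (A ∈ d ∨ Z \ A ∈ d))

def IsNonprincipalOn {α : Type*} (Z : Set α) (d : Set (Set α)) : Prop :=
  IsUltrafilterOn Z d ∧ ∀ x : α, {x} ∉ d

def IsClubIn (C : Set Ordinal) (lam : Ordinal) : Prop :=
  C ⊆ Iio lam ∧ (∀ β < lam, ∃ δ ∈ C, β < δ) ∧
  (∀ β < lam, β ≠ 0 → sSup (C ∩ Iio β) = β → β ∈ C)

def nextIn (C : Set Ordinal) (δ : Ordinal) : Ordinal := sInf (C \ Iic δ)

/-- An element of `Q⁰_λ`: a club `C` of limit ordinals below `λ`, together with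
a non-principal ultrafilter `d δ` on the interval `Z_δ = [δ, min(C ∖ (δ+1)))` for each `δ ∈ C`. -/
structure QZero (lam : Ordinal) where
  C : Set Ordinal
  d : Ordinal → Set (Set Ordinal)
  club : IsClubIn C lam
  limit : ∀ δ ∈ C, Order.IsSuccLimit δ
  ultra : ∀ δ ∈ C, IsNonprincipalOn (Ico δ (nextIn C δ)) (d δ)

def QZero.Z {lam : Ordinal} (p : QZero lam) (δ : Ordinal) : Set Ordinal :=
  Ico δ (nextIn p.C δ)

def fil {lam : Ordinal} (p : QZero lam) : Set (Set Ordinal) :=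
  {A | A ⊆ Iio lam ∧ ∃ ε < lam, ∀ δ ∈ p.C, ε ≤ δ → A ∩ p.Z δ ∈ p.d δ}

def le0 {lam : Ordinal} (p q : QZero lam) : Prop := fil p ⊆ fil q

def filG {lam : Ordinal} (G : Set (QZero lam)) : Set (Set Ordinal) :=
  ⋃ p ∈ G, fil p


lemma nextIn_nonempty {C : Set Ordinal} {lam : Ordinal} (hC : IsClubIn C lam)
    {δ : Ordinal} (hδ : δ < lam) : (C \ Iic δ).Nonempty := by
  obtain ⟨γ, hγC, hγ⟩ := hC.2.1 δ hδ
  exact ⟨γ, hγC, by simpa using hγ⟩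

lemma nextIn_mem {C : Set Ordinal} {lam : Ordinal} (hC : IsClubIn C lam)
    {δ : Ordinal} (hδ : δ < lam) : nextIn C δ ∈ C ∧ δ < nextIn C δ := by
  have h := csInf_mem (nextIn_nonempty hC hδ)
  exact ⟨h.1, by simpa [nextIn] using h.2⟩

lemma nextIn_le {C : Set Ordinal} {δ γ : Ordinal} (hγ : γ ∈ C) (h : δ < γ) :
    nextIn C δ ≤ γ := csInf_le' ⟨hγ, by simpa using h⟩

lemma nextIn_lt {C : Set Ordinal} {lam : Ordinal} (hC : IsClubIn C lam)
    {δ : Ordinal} (hδ : δ < lam) : nextIn C δ < lam := hC.1 (nextIn_mem hC hδ).1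

lemma nextIn_mono {C : Set Ordinal} {lam : Ordinal} (hC : IsClubIn C lam)
    {δ δ' : Ordinal} (h : δ ≤ δ') (hδ' : δ' < lam) : nextIn C δ ≤ nextIn C δ' := by
  obtain ⟨hm, hgt⟩ := nextIn_mem hC hδ'
  exact nextIn_le hm (h.trans_lt hgt)

lemma exists_closure {κ : Cardinal} (hreg : κ.IsRegular) (hunc : Cardinal.aleph0 < κ)
    (h : Ordinal → Ordinal) (hh : ∀ ε < κ.ord, h ε < κ.ord) {ε₀ : Ordinal} (hε₀ : ε₀ < κ.ord) :
    ∃ γ, ε₀ < γ ∧ γ < κ.ord ∧ ∀ ε < γ, h ε < γ := by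
  have hcof : κ.ord.cof = κ := hreg.cof_eq
  have hlim : Order.IsSuccLimit κ.ord := Cardinal.isSuccLimit_ord hreg.aleph0_le
  let e : ℕ → Ordinal := fun n =>
    Nat.rec (ε₀ + 1) (fun _ x => max (x + 1) (Ordinal.blsub x (fun j _ => h j))) n
  have hes : ∀ n, e (n + 1) = max (e n + 1) (Ordinal.blsub (e n) (fun j _ => h j)) :=
    fun n => rfl
  have helt : ∀ n, e n < κ.ord := by
    intro n
    induction n with
    | zero =>
      have := hlim.succ_lt hε₀
      exact lt_of_eq_of_lt (Ordinal.add_one_eq_succ _) this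
    | succ n ih =>
      rw [hes n]
      refine max_lt ?_ ?_
      · have := hlim.succ_lt ih
        exact lt_of_eq_of_lt (Ordinal.add_one_eq_succ _) this
      · refine Ordinal.blsub_lt_ord_lift ?_ ?_
        · rw [hcof, Cardinal.lift_id]
          exact (Cardinal.lt_ord.mp ih)
        · intro i hi
          exact hh i (hi.trans ih)
  refine ⟨iSup e, ?_, ?_, ?_⟩
  · calc ε₀ < ε₀ + 1 := lt_add_one ε₀
      _ = e 0 := rfl
      _ ≤ iSup e := Ordinal.le_iSup e 0
  · refine Ordinal.iSup_lt_ord_lift ?_ helt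
    rw [hcof, Cardinal.mk_nat, Cardinal.lift_aleph0]
    exact hunc
  · intro ε hε
    obtain ⟨n, hn⟩ := Ordinal.lt_iSup_iff.mp hε
    have h1 : h ε < Ordinal.blsub (e n) (fun j _ => h j) := Ordinal.lt_blsub _ ε hn
    have h2 : Ordinal.blsub (e n) (fun j _ => h j) ≤ e (n + 1) := by
      rw [hes n]; exact le_max_right _ _
    exact h1.trans_le (h2.trans (Ordinal.le_iSup e (n + 1)))

/-- `p ≤⁰ q` iff there is `ε < λ` such that for all `α ∈ C^q ∖ ε` and all `A ∈ d^q_α`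
there exists `β ∈ C^p` with `A ∩ Z^p_β ∈ d^p_β`. -/
theorem statement3 (κ : Cardinal) (hreg : κ.IsRegular) (hunc : Cardinal.aleph0 < κ)
    (p q : QZero κ.ord) :
    le0 p q ↔
      ∃ ε < κ.ord, ∀ α ∈ q.C, ε ≤ α → ∀ A ∈ q.d α, ∃ β ∈ p.C, A ∩ p.Z β ∈ p.d β := by
  constructor
  · -- forward direction, by contradiction
    intro hle
    by_contra hno
    push_neg at hno
    choose! f hfC hfge A hAd hAbad using hno
    have hflt : ∀ ε < κ.ord, f ε < κ.ord := fun ε hε => q.club.1 (hfC ε hε)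
    set h : Ordinal → Ordinal := fun ε => nextIn p.C (nextIn q.C (f ε)) with hh_def
    have hh : ∀ ε < κ.ord, h ε < κ.ord :=
      fun ε hε => nextIn_lt p.club (nextIn_lt q.club (hflt ε hε))
    set D : Set Ordinal := {γ | γ < κ.ord ∧ ∀ ε < γ, h ε < γ} with hD_def
    set U : Set Ordinal := ⋃ γ ∈ D, A γ with hU_def
    set X : Set Ordinal := ⋃ δ ∈ p.C, (p.Z δ \ U) with hX_def
    -- separation: distinct members of D give witnesses meeting disjoint Z^p-blocks
    have hsep : ∀ γ ∈ D, ∀ γ' ∈ D, γ < γ' → ∀ δ ∈ p.C,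
        (A γ ∩ p.Z δ).Nonempty → A γ' ∩ p.Z δ = ∅ := by
      rintro γ ⟨hgl, _⟩ γ' ⟨hgpl, hγ'cl⟩ hlt δ hδ ⟨x, hxA, hxZ⟩
      have hfγ := hfC γ hgl
      have hAsubγ := (q.ultra (f γ) hfγ).1.1 _ (hAd γ hgl)
      have hδlt : δ < nextIn q.C (f γ) := lt_of_le_of_lt hxZ.1 (hAsubγ hxA).2
      have h1 : nextIn p.C δ ≤ h γ :=
        nextIn_mono p.club hδlt.le (nextIn_lt q.club (hflt γ hgl))
      have h2 : h γ < γ' := hγ'cl γ hlt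
      have h3 : γ' ≤ f γ' := hfge γ' hgpl
      ext y
      simp only [mem_inter_iff, mem_empty_iff_false, iff_false, not_and]
      intro hyA hyZ
      have hy1 : f γ' ≤ y := ((q.ultra (f γ') (hfC γ' hgpl)).1.1 _ (hAd γ' hgpl) hyA).1
      have hy2 : y < nextIn p.C δ := hyZ.2
      exact absurd (h3.trans hy1) (not_le.2 ((hy2.trans_le h1).trans h2))
    -- each Z^p-block minus U is in the corresponding ultrafilter
    have hXd : ∀ δ ∈ p.C, p.Z δ \ U ∈ p.d δ := by
      intro δ hδ
      obtain ⟨⟨hpsub, hpZ, hpemp, hpup, hpint, hpdich⟩, -⟩ := p.ultra δ hδ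
      by_cases hex : ∃ γ ∈ D, (A γ ∩ p.Z δ).Nonempty
      · obtain ⟨γ₀, hγ₀D, hne⟩ := hex
        have hbad : A γ₀ ∩ p.Z δ ∉ p.d δ := hAbad γ₀ hγ₀D.1 δ hδ
        have hdich := hpdich (A γ₀ ∩ p.Z δ) inter_subset_right
        have hcompl : p.Z δ \ (A γ₀ ∩ p.Z δ) ∈ p.d δ := by
          rcases hdich with hc | hc
          · exact absurd hc hbad
          · exact hc
        refine hpup _ _ hcompl ?_ diff_subset
        rintro y ⟨hy1, hy2⟩
        refine ⟨hy1, fun hyU => ?_⟩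
        obtain ⟨γ, hγD, hyA⟩ := mem_iUnion₂.mp hyU
        have hyA0 : y ∈ A γ₀ := by
          rcases lt_trichotomy γ γ₀ with hlt | heq | hgt
          · exact absurd hne (by
              rw [hsep γ hγD γ₀ hγ₀D hlt δ hδ ⟨y, hyA, hy1⟩]
              exact not_nonempty_empty)
          · rw [← heq]; exact hyA
          · exact absurd (show y ∈ A γ ∩ p.Z δ from ⟨hyA, hy1⟩)
              (by rw [hsep γ₀ hγ₀D γ hγD hgt δ hδ hne]; exact notMem_empty y)
        exact hy2 ⟨hyA0, hy1⟩
      · push_neg at hex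
        refine hpup _ _ hpZ ?_ diff_subset
        intro y hy
        refine ⟨hy, fun hyU => ?_⟩
        obtain ⟨γ, hγD, hyA⟩ := mem_iUnion₂.mp hyU
        have hmem : y ∈ A γ ∩ p.Z δ := ⟨hyA, hy⟩
        rw [hex γ hγD] at hmem
        exact hmem
    -- disjointness of distinct Z^p-blocks
    have hZdisj : ∀ δ ∈ p.C, ∀ δ' ∈ p.C, δ < δ' → p.Z δ ∩ p.Z δ' = ∅ := by
      intro δ hδ δ' hδ' hlt
      ext x
      simp only [mem_inter_iff, mem_empty_iff_false, iff_false, not_and]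
      intro hx1 hx2
      exact absurd hx2.1 (not_le.2 (lt_of_lt_of_le hx1.2 (nextIn_le hδ' hlt)))
    -- X ∈ fil p
    have hXfil : X ∈ fil p := by
      refine ⟨?_, 0, hreg.ord_pos, ?_⟩
      · intro x hx
        obtain ⟨δ, hδ, hxZ⟩ := mem_iUnion₂.mp hx
        exact (hxZ.1.2).trans (nextIn_lt p.club (p.club.1 hδ))
      · intro δ hδ _
        have hXZ : X ∩ p.Z δ = p.Z δ \ U := by
          apply Subset.antisymm
          · rintro x ⟨hxX, hxZ⟩
            obtain ⟨δ', hδ', hxZ'⟩ := mem_iUnion₂.mp hxX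
            rcases lt_trichotomy δ' δ with hlt | heq | hgt
            · exact absurd (show x ∈ p.Z δ' ∩ p.Z δ from ⟨hxZ'.1, hxZ⟩)
                (by rw [hZdisj δ' hδ' δ hδ hlt]; exact notMem_empty x)
            · rw [← heq]; exact hxZ'
            · exact absurd (show x ∈ p.Z δ ∩ p.Z δ' from ⟨hxZ, hxZ'.1⟩)
                (by rw [hZdisj δ hδ δ' hδ' hgt]; exact notMem_empty x)
          · intro x hx
            exact ⟨mem_iUnion₂.mpr ⟨δ, hδ, hx⟩, hx.1⟩
        rw [hXZ]
        exact hXd δ hδ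
    -- but X ∉ fil q
    obtain ⟨-, ε'', hel, hXq⟩ := hle hXfil
    obtain ⟨γ, hγgt, hgl, hγcl⟩ := exists_closure hreg hunc h hh hel
    have hγD : γ ∈ D := ⟨hgl, hγcl⟩
    have hα := hfC γ hgl
    have hXZq : X ∩ q.Z (f γ) ∈ q.d (f γ) :=
      hXq (f γ) hα (hγgt.le.trans (hfge γ hgl))
    obtain ⟨⟨hqsub, hqZ, hqemp, hqup, hqint, hqdich⟩, -⟩ := q.ultra (f γ) hα
    have hint := hqint _ _ hXZq (hAd γ hgl)
    have hemp : (X ∩ q.Z (f γ)) ∩ A γ = ∅ := by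
      ext x
      simp only [mem_inter_iff, mem_empty_iff_false, iff_false, not_and]
      rintro ⟨hxX, -⟩ hxA
      obtain ⟨δ, hδ, hxZ⟩ := mem_iUnion₂.mp hxX
      exact hxZ.2 (mem_iUnion₂.mpr ⟨γ, hγD, hxA⟩)
    rw [hemp] at hint
    exact hqemp hint
  · -- backward direction
    rintro ⟨ε, hε, hcond⟩ A ⟨hAsub, ε₁, hε₁, hA⟩
    refine ⟨hAsub, max ε (nextIn p.C ε₁), max_lt hε (nextIn_lt p.club hε₁), ?_⟩
    intro α hα hεα
    by_contra hnotin
    obtain ⟨⟨hqsub, hqZ, hqemp, hqup, hqint, hqdich⟩, -⟩ := q.ultra α hα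
    have hB : q.Z α \ A ∈ q.d α := by
      rcases hqdich (A ∩ Ico α (nextIn q.C α)) inter_subset_right with hc | hc
      · exact absurd hc hnotin
      · have : Ico α (nextIn q.C α) \ (A ∩ Ico α (nextIn q.C α))
            = Ico α (nextIn q.C α) \ A := diff_inter_self_eq_diff
        rw [this] at hc
        exact hc
    obtain ⟨β, hβ, hBd⟩ := hcond α hα ((le_max_left _ _).trans hεα) _ hB
    obtain ⟨⟨hpsub, hpZ, hpemp, hpup, hpint, hpdich⟩, -⟩ := p.ultra β hβ
    have hne : ((q.Z α \ A) ∩ p.Z β).Nonempty := by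
      rcases eq_empty_or_nonempty ((q.Z α \ A) ∩ p.Z β) with hc | hc
      · rw [hc] at hBd; exact absurd hBd hpemp
      · exact hc
    obtain ⟨x, hx⟩ := hne
    have hxα : α ≤ x := hx.1.1.1
    have hβε₁ : ε₁ ≤ β := by
      by_contra hc
      push_neg at hc
      have h1 : nextIn p.C β ≤ nextIn p.C ε₁ := nextIn_mono p.club hc.le hε₁
      have h2 : x < nextIn p.C β := hx.2.2
      have h3 : nextIn p.C ε₁ ≤ α := (le_max_right ε _).trans hεα
      exact absurd hxα (not_le.2 ((h2.trans_le h1).trans_le h3))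
    have hint := hpint _ _ (hA β hβ hβε₁) hBd
    have hemp : (A ∩ p.Z β) ∩ ((q.Z α \ A) ∩ p.Z β) = ∅ := by
      ext y
      simp only [mem_inter_iff, mem_diff, mem_empty_iff_false, iff_false, not_and]
      tauto
    rw [hemp] at hint
    exact hpemp hint
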